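/- Define, for r ≤ -1 and parameters τ₁, τ₂, η₂, the coefficients c_{k,l}(τ₂,τ₁,η₂) by requiring ∑_{l=1}^{k} c_{k,l}(τ₂,τ₁,η₂) · ([(v+2)(η₂/2+τ₁v)²/v]^l)[v^r] = ([(v+2)(η₂/2+τ₂v)²/v]^k)[v^r] for all integers r ≤ -1, where p(v)[v^r] denotes the coefficient of v^r. Then for k = 2 one has c_{2,2} = 1 and c_{2,1} = 4η₂(τ₂ - τ₁). -/
import Mathlib


/-- `g_{η,τ}(v) = (v+2)(η/2+τv)²`, so that `f_{η,τ}(v) = g_{η,τ}(v)/v` is the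
Laurent polynomial `(v+2)(η/2+τv)²/v` of the paper. -/
noncomputable def gPoly (η τ : ℝ) : Polynomial ℝ :=
  (Polynomial.X + Polynomial.C 2) * (Polynomial.C (η / 2) + Polynomial.C τ * Polynomial.X) ^ 2

/-- `laurentCoeff η τ l r` is the coefficient of `v^r` in the Laurent polynomial
`f_{η,τ}(v)^l = ((v+2)(η/2+τv)²/v)^l = g_{η,τ}(v)^l / v^l`. -/
noncomputable def laurentCoeff (η τ : ℝ) (l : ℕ) (r : ℤ) : ℝ :=
  if h : 0 ≤ r + l then ((gPoly η τ) ^ l).coeff (r + l).toNat else 0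

lemma gsq0 (η τ : ℝ) : ((gPoly η τ)^2).coeff 0 = η^4/4 := by
  rw [Polynomial.coeff_zero_eq_eval_zero]
  simp [gPoly]; ring

lemma gsq1 (η τ : ℝ) : ((gPoly η τ)^2).coeff 1 = η^4/4 + 2*η^3*τ := by
  have : ((gPoly η τ)^2).coeff 1 = (Polynomial.derivative ((gPoly η τ)^2)).coeff 0 := by
    simp [Polynomial.coeff_derivative]
  rw [this, Polynomial.coeff_zero_eq_eval_zero]
  simp [gPoly, Polynomial.derivative_pow, Polynomial.derivative_mul]; ring

lemma g0 (η τ : ℝ) : (gPoly η τ).coeff 0 = η^2/2 := by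
  rw [Polynomial.coeff_zero_eq_eval_zero]; simp [gPoly]; ring

/-- the coefficients `c_{k,l}(τ₂,τ₁,η₂)` are defined by requiring
`∑_{l=1}^{k} c_{k,l} · (f_{η₂,τ₁}(v)^l)[v^r] = (f_{η₂,τ₂}(v)^k)[v^r]` for all
integers `r ≤ -1`.  For `k = 2` one has `c_{2,2} = 1` and
`c_{2,1} = 4η₂(τ₂ - τ₁)`. -/
theorem statement11 (η₂ τ₁ τ₂ : ℝ) (hη : 0 < η₂) (c : ℕ → ℝ)
    (hc : ∀ r : ℤ, r ≤ -1 →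
      ∑ l ∈ Finset.Icc 1 2, c l * laurentCoeff η₂ τ₁ l r = laurentCoeff η₂ τ₂ 2 r) :
    c 2 = 1 ∧ c 1 = 4 * η₂ * (τ₂ - τ₁) := by
  have h2 := hc (-2) (by norm_num)
  have h1 := hc (-1) (by norm_num)
  have hIcc : Finset.Icc 1 2 = ({1, 2} : Finset ℕ) := rfl
  rw [hIcc] at h1 h2
  simp only [Finset.sum_insert (by decide : (1:ℕ) ∉ ({2} : Finset ℕ)),
    Finset.sum_singleton, laurentCoeff] at h1 h2
  norm_num [gsq0, gsq1, g0] at h1 h2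
  have hη4 : η₂^4/4 ≠ 0 := by positivity
  have hc2 : c 2 = 1 := by
    field_simp at h2
    nlinarith [pow_pos hη 4]
  refine ⟨hc2, ?_⟩
  rw [hc2] at h1
  have hη2 : η₂^2 ≠ 0 := by positivity
  nlinarith [pow_pos hη 2, pow_pos hη 3, sq_nonneg η₂]
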